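/- Let s ≥ 1, n ≥ 1, N ≥ 1, let β = diag(β_1, …, β_n) be a real diagonal n×n matrix, let Y⁰ ∈ ℝ^{2n×(2N+1)}, h > 0, and define Φ : ℝ^{2sn×(2N+1)} → ℝ^{2sn×(2N+1)} by Φ(Γ) = ( e₁ ⊗ ((β ⊗ J₂) Y⁰) ) D² + h ( (X_s ⊗ β ⊗ J₂) Γ ) D², where e₁ = (1, 0, …, 0)ᵀ ∈ ℝ^s and ⊗ denotes the Kronecker product. If h · ‖X_s‖ · ‖β‖ · ‖D²‖ < 1 (spectral norms, with ‖D²‖ = (2πN/(b − a))²), then Φ is a contraction with Lipschitz constant at most h‖X_s‖‖β‖‖D²‖; consequently Φ has a unique fixed point Γ*, and for every starting matrix Γ⁰ the fixed-point iteration Γ^{ℓ+1} = Φ(Γ^ℓ) converges to Γ* as ℓ → ∞. -/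

import Mathlib

open Real Filter
open scoped Matrix.Norms.L2Operator Kronecker
open Matrix

section KronNorm

variable {m m' n n' : Type*} [Fintype m] [Fintype m'] [Fintype n] [Fintype n']
  [DecidableEq m] [DecidableEq m'] [DecidableEq n] [DecidableEq n']

lemma euclid_norm_sq {ι : Type*} [Fintype ι] (x : EuclideanSpace ℝ ι) :
    ‖x‖ ^ 2 = ∑ i, (x i) ^ 2 := by
  rw [EuclideanSpace.norm_eq, Real.sq_sqrt (by positivity)]
  simp [Real.norm_eq_abs, sq_abs]

lemma opNorm_le_of_mulVec {m n : Type*} [Fintype m] [Fintype n] [DecidableEq n]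
    (C : Matrix m n ℝ) {c : ℝ} (hc : 0 ≤ c)
    (h : ∀ x : EuclideanSpace ℝ n, ‖(EuclideanSpace.equiv m ℝ).symm (C *ᵥ x)‖ ≤ c * ‖x‖) :
    ‖C‖ ≤ c := by
  rw [Matrix.l2_opNorm_def]
  exact ContinuousLinearMap.opNorm_le_bound _ hc fun x => h x

lemma one_kron_norm_le (B : Matrix n n' ℝ) :
    ‖((1 : Matrix m m ℝ) ⊗ₖ B)‖ ≤ ‖B‖ := by
  refine opNorm_le_of_mulVec _ (norm_nonneg B) fun x => ?_
  set y : m → EuclideanSpace ℝ n' := fun i => (EuclideanSpace.equiv n' ℝ).symm (fun l => x (i, l))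
  have hentry : ∀ i k, (((1 : Matrix m m ℝ) ⊗ₖ B) *ᵥ (x : (m × n') → ℝ)) (i, k)
      = (B *ᵥ (y i : n' → ℝ)) k := by
    intro i k
    simp [Matrix.mulVec, dotProduct, Fintype.sum_prod_type, Matrix.one_apply,
      ite_mul, y, Finset.sum_ite_eq]
  have hsq : ‖(EuclideanSpace.equiv (m × n) ℝ).symm (((1 : Matrix m m ℝ) ⊗ₖ B) *ᵥ x)‖ ^ 2
      ≤ (‖B‖ * ‖x‖) ^ 2 := by
    rw [euclid_norm_sq]
    calc ∑ p : m × n, ((((1 : Matrix m m ℝ) ⊗ₖ B) *ᵥ (x : (m × n') → ℝ)) p) ^ 2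
        = ∑ i : m, ∑ k : n, ((B *ᵥ (y i : n' → ℝ)) k) ^ 2 := by
          rw [Fintype.sum_prod_type]; simp [hentry]
      _ = ∑ i : m, ‖(EuclideanSpace.equiv n ℝ).symm (B *ᵥ (y i : n' → ℝ))‖ ^ 2 := by
          simp [euclid_norm_sq]
      _ ≤ ∑ i : m, (‖B‖ * ‖y i‖) ^ 2 := by
          refine Finset.sum_le_sum fun i _ => ?_
          have := Matrix.l2_opNorm_mulVec B (y i)
          exact pow_le_pow_left₀ (norm_nonneg _) this 2
      _ = ‖B‖ ^ 2 * ∑ i : m, ‖y i‖ ^ 2 := by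
          simp [mul_pow, Finset.mul_sum]
      _ = ‖B‖ ^ 2 * ‖x‖ ^ 2 := by
          rw [euclid_norm_sq x, Fintype.sum_prod_type]
          congr 1
          refine Finset.sum_congr rfl fun i _ => ?_
          rw [euclid_norm_sq (y i)]
          rfl
      _ = (‖B‖ * ‖x‖) ^ 2 := by ring
  have := Real.sqrt_le_sqrt hsq
  rwa [Real.sqrt_sq (norm_nonneg _),
    Real.sqrt_sq (mul_nonneg (norm_nonneg _) (norm_nonneg _))] at this

lemma kron_one_norm_le (A : Matrix m m' ℝ) :
    ‖(A ⊗ₖ (1 : Matrix n n ℝ))‖ ≤ ‖A‖ := by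
  refine opNorm_le_of_mulVec _ (norm_nonneg A) fun x => ?_
  set y : n → EuclideanSpace ℝ m' := fun k => (EuclideanSpace.equiv m' ℝ).symm (fun j => x (j, k))
  have hentry : ∀ i k, ((A ⊗ₖ (1 : Matrix n n ℝ)) *ᵥ (x : (m' × n) → ℝ)) (i, k)
      = (A *ᵥ (y k : m' → ℝ)) i := by
    intro i k
    simp [Matrix.mulVec, dotProduct, Fintype.sum_prod_type, Matrix.one_apply,
      mul_ite, y, Finset.sum_ite_eq]
  have hsq : ‖(EuclideanSpace.equiv (m × n) ℝ).symm ((A ⊗ₖ (1 : Matrix n n ℝ)) *ᵥ x)‖ ^ 2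
      ≤ (‖A‖ * ‖x‖) ^ 2 := by
    rw [euclid_norm_sq]
    calc ∑ p : m × n, (((A ⊗ₖ (1 : Matrix n n ℝ)) *ᵥ (x : (m' × n) → ℝ)) p) ^ 2
        = ∑ k : n, ∑ i : m, ((A *ᵥ (y k : m' → ℝ)) i) ^ 2 := by
          rw [Fintype.sum_prod_type, Finset.sum_comm]; simp [hentry]
      _ = ∑ k : n, ‖(EuclideanSpace.equiv m ℝ).symm (A *ᵥ (y k : m' → ℝ))‖ ^ 2 := by
          simp [euclid_norm_sq]
      _ ≤ ∑ k : n, (‖A‖ * ‖y k‖) ^ 2 := by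
          refine Finset.sum_le_sum fun k _ => ?_
          exact pow_le_pow_left₀ (norm_nonneg _) (Matrix.l2_opNorm_mulVec A (y k)) 2
      _ = ‖A‖ ^ 2 * ∑ k : n, ‖y k‖ ^ 2 := by
          simp [mul_pow, Finset.mul_sum]
      _ = ‖A‖ ^ 2 * ‖x‖ ^ 2 := by
          rw [euclid_norm_sq x, Fintype.sum_prod_type, Finset.sum_comm]
          congr 1
          refine Finset.sum_congr rfl fun k _ => ?_
          rw [euclid_norm_sq (y k)]
          rfl
      _ = (‖A‖ * ‖x‖) ^ 2 := by ring
  have := Real.sqrt_le_sqrt hsq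
  rwa [Real.sqrt_sq (norm_nonneg _),
    Real.sqrt_sq (mul_nonneg (norm_nonneg _) (norm_nonneg _))] at this

lemma kron_norm_le (A : Matrix m m' ℝ) (B : Matrix n n' ℝ) :
    ‖A ⊗ₖ B‖ ≤ ‖A‖ * ‖B‖ := by
  have hfac : A ⊗ₖ B = (A ⊗ₖ (1 : Matrix n n ℝ)) * ((1 : Matrix m' m' ℝ) ⊗ₖ B) := by
    rw [← Matrix.mul_kronecker_mul, Matrix.mul_one, Matrix.one_mul]
  rw [hfac]
  calc ‖(A ⊗ₖ (1 : Matrix n n ℝ)) * ((1 : Matrix m' m' ℝ) ⊗ₖ B)‖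
      ≤ ‖A ⊗ₖ (1 : Matrix n n ℝ)‖ * ‖(1 : Matrix m' m' ℝ) ⊗ₖ B‖ := Matrix.l2_opNorm_mul _ _
    _ ≤ ‖A‖ * ‖B‖ := mul_le_mul (kron_one_norm_le A) (one_kron_norm_le B)
        (norm_nonneg _) (norm_nonneg _)

end KronNorm
/-- If `h‖X_s‖‖β‖‖D²‖ < 1` (spectral norms), then the fixed-point map
`Φ(Γ) = (e₁ ⊗ ((β ⊗ J₂)Y⁰))D² + h((X_s ⊗ β ⊗ J₂)Γ)D²` of the HBVM iteration (case `γ = 0`)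
is a contraction with Lipschitz constant at most `h‖X_s‖‖β‖‖D²‖`; hence it has a unique
fixed point to which the fixed-point iteration converges from every starting matrix. -/
theorem hbvm_fixed_point_iteration_converges
    (s n N : ℕ) (hs : 1 ≤ s) (hn : 1 ≤ n) (hN : 1 ≤ N)
    (a b : ℝ) (hab : a < b)
    (ξ : ℕ → ℝ)
    (hξ : ∀ i : ℕ, ξ i = 1 / Real.sqrt (2 * Real.sqrt |4 * (i : ℝ) ^ 2 - 1|))
    (Xs : Matrix (Fin s) (Fin s) ℝ)
    (hXs : ∀ i j : Fin s, Xs i j =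
      if (i : ℕ) = 0 ∧ (j : ℕ) = 0 then ξ 0
      else if (i : ℕ) = (j : ℕ) + 1 then ξ (i : ℕ)
      else if (j : ℕ) = (i : ℕ) + 1 then -(ξ (j : ℕ))
      else 0)
    (D : Matrix (Fin (2 * N + 1)) (Fin (2 * N + 1)) ℝ)
    (hD : D = Matrix.diagonal (fun j : Fin (2 * N + 1) =>
      2 * π / (b - a) * (⌈((j : ℕ) : ℝ) / 2⌉ : ℤ)))
    (J2 : Matrix (Fin 2) (Fin 2) ℝ) (hJ2 : J2 = !![0, 1; -1, 0])
    (β : Fin n → ℝ) (βM : Matrix (Fin n) (Fin n) ℝ) (hβM : βM = Matrix.diagonal β)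
    (Y0 : Matrix (Fin n × Fin 2) (Fin (2 * N + 1)) ℝ)
    (h : ℝ) (hh : 0 < h)
    (Φ : Matrix ((Fin s × Fin n) × Fin 2) (Fin (2 * N + 1)) ℝ →
         Matrix ((Fin s × Fin n) × Fin 2) (Fin (2 * N + 1)) ℝ)
    (hΦ : ∀ Γ r c, Φ Γ r c =
      (if (r.1.1 : ℕ) = 0 then 1 else 0) * ((βM ⊗ₖ J2) * Y0 * (D * D)) (r.1.2, r.2) c
        + h * (((Xs ⊗ₖ βM) ⊗ₖ J2) * Γ * (D * D)) r c)
    (hcontr : h * ‖Xs‖ * ‖βM‖ * ‖D * D‖ < 1) :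
    (∀ Γ₁ Γ₂, ‖Φ Γ₁ - Φ Γ₂‖ ≤ (h * ‖Xs‖ * ‖βM‖ * ‖D * D‖) * ‖Γ₁ - Γ₂‖)
    ∧ ∃ Γstar, Φ Γstar = Γstar
        ∧ (∀ Γ', Φ Γ' = Γ' → Γ' = Γstar)
        ∧ ∀ Γ0, Tendsto (fun ℓ : ℕ => Φ^[ℓ] Γ0) atTop (nhds Γstar) := by
    classical
  set M : Matrix ((Fin s × Fin n) × Fin 2) ((Fin s × Fin n) × Fin 2) ℝ :=
    (Xs ⊗ₖ βM) ⊗ₖ J2 with hM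
  -- ‖J2‖ = 1
  have hJ2mul : J2ᴴ * J2 = 1 := by
    subst hJ2
    ext i j
    fin_cases i <;> fin_cases j <;>
      simp [Matrix.mul_apply, Fin.sum_univ_two, Matrix.one_apply, Matrix.conjTranspose_apply,
        Matrix.vecHead, Matrix.vecTail]
  have hone : ‖(1 : Matrix (Fin 2) (Fin 2) ℝ)‖ = 1 := by
    rw [Matrix.cstar_norm_def, _root_.map_one]
    exact norm_one
  have hJ2norm : ‖J2‖ = 1 := by
    have h2 : ‖J2‖ * ‖J2‖ = 1 := by
      rw [← Matrix.l2_opNorm_conjTranspose_mul_self, hJ2mul, hone]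
    rcases mul_self_eq_one_iff.mp h2 with h1 | h1
    · exact h1
    · nlinarith [norm_nonneg J2]
  have hMnorm : ‖M‖ ≤ ‖Xs‖ * ‖βM‖ := by
    calc ‖M‖ ≤ ‖Xs ⊗ₖ βM‖ * ‖J2‖ := kron_norm_le _ _
      _ ≤ (‖Xs‖ * ‖βM‖) * 1 := by
          rw [hJ2norm]
          exact mul_le_mul_of_nonneg_right (kron_norm_le _ _) zero_le_one
      _ = ‖Xs‖ * ‖βM‖ := mul_one _
  -- Lipschitz bound
  have lip : ∀ Γ₁ Γ₂, ‖Φ Γ₁ - Φ Γ₂‖ ≤ (h * ‖Xs‖ * ‖βM‖ * ‖D * D‖) * ‖Γ₁ - Γ₂‖ := by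
    intro Γ₁ Γ₂
    have hdiff : Φ Γ₁ - Φ Γ₂ = h • (M * (Γ₁ - Γ₂) * (D * D)) := by
      ext r c
      simp only [Matrix.sub_apply, hΦ, Matrix.smul_apply, Matrix.mul_sub, Matrix.sub_mul,
        smul_eq_mul, hM]
      ring
    rw [hdiff, norm_smul, Real.norm_eq_abs, abs_of_pos hh]
    calc h * ‖M * (Γ₁ - Γ₂) * (D * D)‖
        ≤ h * (‖M * (Γ₁ - Γ₂)‖ * ‖D * D‖) := by
          exact mul_le_mul_of_nonneg_left (Matrix.l2_opNorm_mul _ _) hh.le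
      _ ≤ h * ((‖M‖ * ‖Γ₁ - Γ₂‖) * ‖D * D‖) := by
          gcongr
          exact Matrix.l2_opNorm_mul _ _
      _ ≤ h * (((‖Xs‖ * ‖βM‖) * ‖Γ₁ - Γ₂‖) * ‖D * D‖) := by
          gcongr
      _ = (h * ‖Xs‖ * ‖βM‖ * ‖D * D‖) * ‖Γ₁ - Γ₂‖ := by ring
  refine ⟨lip, ?_⟩
  have hK0 : 0 ≤ h * ‖Xs‖ * ‖βM‖ * ‖D * D‖ := by positivity
  set K : NNReal := ⟨h * ‖Xs‖ * ‖βM‖ * ‖D * D‖, hK0⟩ with hKdef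
  have hL : LipschitzWith K Φ := by
    refine LipschitzWith.of_dist_le_mul fun x y => ?_
    rw [dist_eq_norm, dist_eq_norm]
    exact lip x y
  have hK1 : K < 1 := by
    rw [← NNReal.coe_lt_coe]
    exact hcontr
  have hC : ContractingWith K Φ := ⟨hK1, hL⟩
  haveI : CompleteSpace (Matrix ((Fin s × Fin n) × Fin 2) (Fin (2 * N + 1)) ℝ) :=
    FiniteDimensional.complete ℝ _
  refine ⟨hC.fixedPoint Φ, hC.fixedPoint_isFixedPt, fun Γ' hΓ' => hC.fixedPoint_unique hΓ',
    fun Γ0 => hC.tendsto_iterate_fixedPoint Γ0⟩
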